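/- Let E be a spectral sequence of abelian groups equipped with an operator κ̄ of bidegree (4,24), satisfying the standing hypotheses, and assume additionally that E_2^{s,t} = 0 whenever s < 0. Let r ≥ 2 and let a ∈ E_r^{s,t} be a nonzero element with κ̄^n a = 0 for some n ≥ 1. Then a survives to the E_{r'}-page for every r' ≥ r, and moreover, setting a_r = a and inductively a_{ρ+1} = the class of a_ρ in E_{ρ+1}^{s,t}, one has a_{r'} ≠ 0 in E_{r'}^{s,t} for every r' ≥ r. (In other words, every nonzero κ̄-power-torsion class is a permanent cycle, is never a boundary, and survives to E_∞.) -/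

import Mathlib

/-- A spectral sequence of abelian groups in cohomological Adams indexing:
pages `E r s t` (for `r ≥ 2`; lower pages are irrelevant), differentials
`d r` of bidegree `(r, r - 1)` squaring to zero, and an identification of the
`(r+1)`-st page with the homology of the `r`-th page, encoded by the map
`pageMap` sending a `d r`-cycle to its class in `E (r+1)`, which is additive,
surjective, and kills exactly the `d r`-boundaries. -/
structure SpectralSequence (E : ℕ → ℤ → ℤ → Type)
    [∀ r s t, AddCommGroup (E r s t)] where
  d : ∀ (r : ℕ) (s t : ℤ), E r s t →+ E r (s + r) (t + r - 1)
  d_d : ∀ (r : ℕ) (s t : ℤ) (x : E r s t),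
    d r (s + r) (t + r - 1) (d r s t x) = 0
  pageMap : ∀ (r : ℕ) (s t : ℤ) (x : E r s t), d r s t x = 0 → E (r + 1) s t
  pageMap_add : ∀ (r : ℕ) (s t : ℤ) (x y : E r s t)
    (hx : d r s t x = 0) (hy : d r s t y = 0) (hxy : d r s t (x + y) = 0),
    pageMap r s t (x + y) hxy = pageMap r s t x hx + pageMap r s t y hy
  pageMap_surjective : ∀ (r : ℕ) (s t : ℤ) (y : E (r + 1) s t),
    ∃ (x : E r s t) (hx : d r s t x = 0), pageMap r s t x hx = y
  pageMap_eq_zero_iff : ∀ (r : ℕ) (s t : ℤ) (x : E r s t) (hx : d r s t x = 0),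
    pageMap r s t x hx = 0 ↔
      ∃ (s' t' : ℤ) (h : s' + (r : ℤ) = s) (h' : t' + (r : ℤ) - 1 = t)
        (w : E r s' t'),
        cast (congrArg₂ (E r) h h') (d r s' t' w) = x

/-- An operator `κ̄` of bidegree `(4, 24)` on a spectral sequence: a family of
group homomorphisms commuting with the differentials and compatible with the
identification of the `(r+1)`-st pages with the homology of the `r`-th pages. -/
structure KappaOp {E : ℕ → ℤ → ℤ → Type} [∀ r s t, AddCommGroup (E r s t)]
    (SS : SpectralSequence E) where
  κ : ∀ (r : ℕ) (s t : ℤ), E r s t →+ E r (s + 4) (t + 24)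
  comm_d : ∀ (r : ℕ) (s t : ℤ) (x : E r s t),
    SS.d r (s + 4) (t + 24) (κ r s t x) =
      cast (congrArg₂ (E r) (by ring) (by ring))
        (κ r (s + r) (t + r - 1) (SS.d r s t x))
  comm_pageMap : ∀ (r : ℕ) (s t : ℤ) (x : E r s t) (hx : SS.d r s t x = 0)
    (hκx : SS.d r (s + 4) (t + 24) (κ r s t x) = 0),
    κ (r + 1) s t (SS.pageMap r s t x hx) =
      SS.pageMap r (s + 4) (t + 24) (κ r s t x) hκx

/-- Iterates `κ̄ ^ n` of the operator `κ̄`. -/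
def KappaOp.iter {E : ℕ → ℤ → ℤ → Type} [∀ r s t, AddCommGroup (E r s t)]
    {SS : SpectralSequence E} (K : KappaOp SS) (r : ℕ) (s t : ℤ) :
    (n : ℕ) → E r s t → E r (s + 4 * n) (t + 24 * n)
  | 0, x => cast (congrArg₂ (E r) (by push_cast; ring) (by push_cast; ring)) x
  | n + 1, x =>
      cast (congrArg₂ (E r) (by push_cast; ring) (by push_cast; ring))
        (K.κ r (s + 4 * n) (t + 24 * n) (K.iter r s t n x))

/-- `x` is `κ̄`-free if `κ̄ ^ n • x ≠ 0` for all `n ≥ 0`. -/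
def KappaOp.KappaFree {E : ℕ → ℤ → ℤ → Type} [∀ r s t, AddCommGroup (E r s t)]
    {SS : SpectralSequence E} (K : KappaOp SS) (r : ℕ) (s t : ℤ)
    (x : E r s t) : Prop :=
  ∀ n : ℕ, K.iter r s t n x ≠ 0

/-- `x` is `κ̄`-divisible if `x = κ̄ • y` for some `y`. -/
def KappaOp.KappaDivisible {E : ℕ → ℤ → ℤ → Type}
    [∀ r s t, AddCommGroup (E r s t)]
    {SS : SpectralSequence E} (K : KappaOp SS) (r : ℕ) (s t : ℤ)
    (x : E r s t) : Prop :=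
  ∃ (s' t' : ℤ) (h : s' + 4 = s) (h' : t' + 24 = t) (y : E r s' t'),
    cast (congrArg₂ (E r) h h') (K.κ r s' t' y) = x

/-- The standing hypotheses (satisfied by the `E₂`-term of the elliptic
spectral sequence for `tmf ∧ Y`): every nonzero element of `E₂` of filtration
`≥ 2` is `κ̄`-free, and every element of `E₂` of filtration `≥ 4` is
`κ̄`-divisible. -/
def KappaOp.StandingHypotheses {E : ℕ → ℤ → ℤ → Type}
    [∀ r s t, AddCommGroup (E r s t)]
    {SS : SpectralSequence E} (K : KappaOp SS) : Prop :=
  (∀ (s t : ℤ) (x : E 2 s t), x ≠ 0 → 2 ≤ s → K.KappaFree 2 s t x) ∧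
  (∀ (s t : ℤ) (x : E 2 s t), 4 ≤ s → K.KappaDivisible 2 s t x)

/-- `SS.IsClassOf s t r x r' y` says that `x ∈ E r` survives to the page
`E r'` and that `y` is its class there: setting `x_r = x` and inductively
`x_{ρ+1}` the class of `x_ρ` (which requires `d_ρ x_ρ = 0`), one has
`y = x_{r'}`. -/
inductive SpectralSequence.IsClassOf {E : ℕ → ℤ → ℤ → Type}
    [∀ r s t, AddCommGroup (E r s t)] (SS : SpectralSequence E) (s t : ℤ) :
    (r : ℕ) → E r s t → (r' : ℕ) → E r' s t → Prop
  | refl (r : ℕ) (x : E r s t) : SpectralSequence.IsClassOf SS s t r x r x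
  | step {r r' : ℕ} {x : E r s t} {y : E r' s t} (hy : SS.d r' s t y = 0)
      (h : SpectralSequence.IsClassOf SS s t r x r' y) :
      SpectralSequence.IsClassOf SS s t r x (r' + 1) (SS.pageMap r' s t y hy)

section KappaTorsionAux

variable {E : ℕ → ℤ → ℤ → Type} [∀ r s t, AddCommGroup (E r s t)]

theorem E_hzero {r : ℕ} {s t s' t' : ℤ} (h : s = s') (h' : t = t') :
    HEq (0 : E r s t) (0 : E r s' t') := by subst h; subst h'; rfl

theorem E_eq_zero_iff_of_heq {r : ℕ} {s t s' t' : ℤ} (h : s = s') (h' : t = t')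
    {x : E r s t} {y : E r s' t'} (e : HEq x y) : x = 0 ↔ y = 0 := by
  subst h; subst h'; rw [eq_of_heq e]

theorem E_eq_zero_of_heq_zero {r : ℕ} {s t s' t' : ℤ} (h : s = s') (h' : t = t')
    {x : E r s t} (e : HEq x (0 : E r s' t')) : x = 0 :=
  (E_eq_zero_iff_of_heq h h' e).mpr rfl

variable {SS : SpectralSequence E}

theorem d_hcongr (SS : SpectralSequence E) {r : ℕ} {s t s' t' : ℤ} (h : s = s')
    (h' : t = t') {x : E r s t} {y : E r s' t'} (e : HEq x y) :
    HEq (SS.d r s t x) (SS.d r s' t' y) := by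
  subst h; subst h'; rw [eq_of_heq e]

theorem κ_hcongr (K : KappaOp SS) {r : ℕ} {s t s' t' : ℤ} (h : s = s')
    (h' : t = t') {x : E r s t} {y : E r s' t'} (e : HEq x y) :
    HEq (K.κ r s t x) (K.κ r s' t' y) := by
  subst h; subst h'; rw [eq_of_heq e]

theorem pageMap_congr (SS : SpectralSequence E) {r : ℕ} {s t : ℤ} {x y : E r s t}
    (e : x = y) (hx : SS.d r s t x = 0) (hy : SS.d r s t y = 0) :
    SS.pageMap r s t x hx = SS.pageMap r s t y hy := by subst e; rfl

theorem pageMap_hcongr (SS : SpectralSequence E) {r : ℕ} {s t s' t' : ℤ}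
    (h : s = s') (h' : t = t') {x : E r s t} {y : E r s' t'} (e : HEq x y)
    (hx : SS.d r s t x = 0) (hy : SS.d r s' t' y = 0) :
    HEq (SS.pageMap r s t x hx) (SS.pageMap r s' t' y hy) := by
  subst h; subst h'
  exact heq_of_eq (pageMap_congr SS (eq_of_heq e) hx hy)

theorem pageMap_zero (SS : SpectralSequence E) (r : ℕ) (s t : ℤ)
    (h0 : SS.d r s t (0 : E r s t) = 0) : SS.pageMap r s t 0 h0 = 0 := by
  have h00 : SS.d r s t (0 + 0 : E r s t) = 0 := by rw [add_zero]; exact h0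
  have hadd := SS.pageMap_add r s t 0 0 h0 h0 h00
  rw [pageMap_congr SS (add_zero (0 : E r s t)) h00 h0] at hadd
  exact right_eq_add.mp hadd

theorem comm_d_heq (K : KappaOp SS) (r : ℕ) (s t : ℤ) (x : E r s t) :
    HEq (SS.d r (s + 4) (t + 24) (K.κ r s t x))
      (K.κ r (s + r) (t + r - 1) (SS.d r s t x)) := by
  rw [K.comm_d r s t x]; exact cast_heq _ _

theorem pageMap_eq_zero_of (SS : SpectralSequence E) {r : ℕ} {s t : ℤ}
    (x : E r s t) (hx : SS.d r s t x = 0) {s' t' : ℤ} (h : s' + (r : ℤ) = s)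
    (h' : t' + (r : ℤ) - 1 = t) (w : E r s' t')
    (e : HEq (SS.d r s' t' w) x) : SS.pageMap r s t x hx = 0 :=
  (SS.pageMap_eq_zero_iff r s t x hx).mpr
    ⟨s', t', h, h', w,
      eq_of_heq (HEq.trans (cast_heq (congrArg₂ (E r) h h') (SS.d r s' t' w)) e)⟩

end KappaTorsionAux
/-- `κ̄ ^ n • x = 0`, defined without casts (applying `κ̄` on the inside). -/
def KappaOp.TorN {E : ℕ → ℤ → ℤ → Type} [∀ r s t, AddCommGroup (E r s t)]
    {SS : SpectralSequence E} (K : KappaOp SS) (r : ℕ) :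
    (n : ℕ) → (s t : ℤ) → E r s t → Prop
  | 0, _, _, x => x = 0
  | n + 1, s, t, x => K.TorN r n (s + 4) (t + 24) (K.κ r s t x)

/-- `x` is `κ̄`-power-torsion. -/
def KappaOp.Tor {E : ℕ → ℤ → ℤ → Type} [∀ r s t, AddCommGroup (E r s t)]
    {SS : SpectralSequence E} (K : KappaOp SS) (r : ℕ) (s t : ℤ)
    (x : E r s t) : Prop :=
  ∃ n : ℕ, K.TorN r n s t x

section KappaTorsionAux2

variable {E : ℕ → ℤ → ℤ → Type} [∀ r s t, AddCommGroup (E r s t)]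
variable {SS : SpectralSequence E}

theorem TorN_hcongr {K : KappaOp SS} {r n : ℕ} {s t s' t' : ℤ} (h : s = s')
    (h' : t = t') {x : E r s t} {y : E r s' t'} (e : HEq x y) :
    K.TorN r n s t x ↔ K.TorN r n s' t' y := by
  subst h; subst h'; rw [eq_of_heq e]

theorem TorN_d (K : KappaOp SS) (r : ℕ) (n : ℕ) : ∀ (s t : ℤ) (x : E r s t),
    K.TorN r n s t x → K.TorN r n (s + (r : ℤ)) (t + (r : ℤ) - 1) (SS.d r s t x) := by
  induction n with
  | zero =>
    intro s t x hx
    show SS.d r s t x = 0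
    rw [hx]; exact map_zero _
  | succ n ih =>
    intro s t x hx
    have h1 := ih (s + 4) (t + 24) (K.κ r s t x) hx
    show K.TorN r n (s + (r : ℤ) + 4) (t + (r : ℤ) - 1 + 24)
      (K.κ r (s + (r : ℤ)) (t + (r : ℤ) - 1) (SS.d r s t x))
    exact (TorN_hcongr (by ring) (by ring) (comm_d_heq K r s t x).symm).mpr h1

theorem TorN_pageMap (K : KappaOp SS) (r : ℕ) (n : ℕ) :
    ∀ (s t : ℤ) (x : E r s t) (hd : SS.d r s t x = 0),
    K.TorN r n s t x → K.TorN (r + 1) n s t (SS.pageMap r s t x hd) := by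
  induction n with
  | zero =>
    intro s t x hd hx
    show SS.pageMap r s t x hd = 0
    rw [pageMap_congr SS hx hd (map_zero _)]
    exact pageMap_zero SS r s t _
  | succ n ih =>
    intro s t x hd hx
    have hκd : SS.d r (s + 4) (t + 24) (K.κ r s t x) = 0 := by
      rw [K.comm_d r s t x, hd, map_zero]
      exact E_eq_zero_of_heq_zero (by ring) (by ring) (cast_heq _ _)
    show K.TorN (r + 1) n (s + 4) (t + 24)
      (K.κ (r + 1) s t (SS.pageMap r s t x hd))
    rw [K.comm_pageMap r s t x hd hκd]
    exact ih (s + 4) (t + 24) (K.κ r s t x) hκd hx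

theorem heq_iter_zero (K : KappaOp SS) (r : ℕ) (s t : ℤ) (x : E r s t) :
    HEq (K.iter r s t 0 x) x := cast_heq _ _

theorem heq_iter_succ (K : KappaOp SS) (r n : ℕ) (s t : ℤ) (x : E r s t) :
    HEq (K.iter r s t (n + 1) x)
      (K.κ r (s + 4 * (n : ℤ)) (t + 24 * (n : ℤ)) (K.iter r s t n x)) :=
  cast_heq _ _

theorem iter_shift_heq (K : KappaOp SS) (r : ℕ) (n : ℕ) :
    ∀ (s t : ℤ) (x : E r s t),
    HEq (K.iter r (s + 4) (t + 24) n (K.κ r s t x))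
      (K.κ r (s + 4 * (n : ℤ)) (t + 24 * (n : ℤ)) (K.iter r s t n x)) := by
  induction n with
  | zero =>
    intro s t x
    refine (heq_iter_zero K r (s + 4) (t + 24) (K.κ r s t x)).trans ?_
    exact (κ_hcongr K (by push_cast; ring) (by push_cast; ring)
      (heq_iter_zero K r s t x)).symm
  | succ n ih =>
    intro s t x
    refine (heq_iter_succ K r n (s + 4) (t + 24) (K.κ r s t x)).trans ?_
    refine (κ_hcongr K (by push_cast; ring) (by push_cast; ring) (ih s t x)).trans ?_
    exact κ_hcongr K (by push_cast; ring) (by push_cast; ring)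
      (heq_iter_succ K r n s t x).symm

theorem iter_eq_zero_iff (K : KappaOp SS) (r : ℕ) (n : ℕ) :
    ∀ (s t : ℤ) (x : E r s t), K.iter r s t n x = 0 ↔ K.TorN r n s t x := by
  induction n with
  | zero =>
    intro s t x
    exact E_eq_zero_iff_of_heq (by push_cast; ring) (by push_cast; ring)
      (heq_iter_zero K r s t x)
  | succ n ih =>
    intro s t x
    have e1 : K.iter r s t (n + 1) x = 0 ↔
        K.κ r (s + 4 * (n : ℤ)) (t + 24 * (n : ℤ)) (K.iter r s t n x) = 0 :=
      E_eq_zero_iff_of_heq (by push_cast; ring) (by push_cast; ring)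
        (heq_iter_succ K r n s t x)
    have e2 : K.iter r (s + 4) (t + 24) n (K.κ r s t x) = 0 ↔
        K.κ r (s + 4 * (n : ℤ)) (t + 24 * (n : ℤ)) (K.iter r s t n x) = 0 :=
      E_eq_zero_iff_of_heq (by push_cast; ring) (by push_cast; ring)
        (iter_shift_heq K r n s t x)
    exact e1.trans (e2.symm.trans (ih (s + 4) (t + 24) (K.κ r s t x)))

end KappaTorsionAux2
section KappaTorsionPkg

variable {E : ℕ → ℤ → ℤ → Type} [∀ r s t, AddCommGroup (E r s t)]
variable {SS : SpectralSequence E}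

/-- The inductive package: on every page `r ≥ 2`, the negative filtrations
vanish, filtrations `≥ 4` are `κ̄`-divisible, and all `κ̄`-power-torsion in
filtrations `≥ r` vanishes. -/
theorem kappa_pkg (K : KappaOp SS) (hyp : K.StandingHypotheses)
    (hneg : ∀ s t : ℤ, s < 0 → ∀ x : E 2 s t, x = 0) :
    ∀ r : ℕ, 2 ≤ r →
      (∀ s t : ℤ, s < 0 → ∀ x : E r s t, x = 0) ∧
      (∀ (s t : ℤ) (x : E r s t), 4 ≤ s → K.KappaDivisible r s t x) ∧
      (∀ (s t : ℤ) (x : E r s t), (r : ℤ) ≤ s → K.Tor r s t x → x = 0) := by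
  intro r hr
  induction r, hr using Nat.le_induction with
  | base =>
    refine ⟨hneg, hyp.2, ?_⟩
    intro s t x hs htor
    by_contra hx0
    obtain ⟨m, hm⟩ := htor
    exact hyp.1 s t x hx0 hs m ((iter_eq_zero_iff K 2 m s t x).mpr hm)
  | succ r hr ih =>
    obtain ⟨hNeg, hDiv, hT⟩ := ih
    -- Neg at page r+1
    have hNeg' : ∀ s t : ℤ, s < 0 → ∀ x : E (r + 1) s t, x = 0 := by
      intro s t hs x
      obtain ⟨z, hz, hpz⟩ := SS.pageMap_surjective r s t x
      rw [← hpz, pageMap_congr SS (hNeg s t hs z) hz (map_zero _)]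
      exact pageMap_zero SS r s t _
    refine ⟨hNeg', ?_, ?_⟩
    · -- Div at page r+1
      intro s t ξ hs
      obtain ⟨x, hx, hpx⟩ := SS.pageMap_surjective r s t ξ
      obtain ⟨s₀, t₀, h0, h0', z, hz⟩ := hDiv s t x hs
      have ez : HEq (K.κ r s₀ t₀ z) x :=
        (cast_heq (congrArg₂ (E r) h0 h0') (K.κ r s₀ t₀ z)).symm.trans
          (heq_of_eq hz)
      have hdκz : SS.d r (s₀ + 4) (t₀ + 24) (K.κ r s₀ t₀ z) = 0 := by
        refine E_eq_zero_of_heq_zero ?_ ?_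
          ((d_hcongr SS h0 h0' ez).trans (heq_of_eq hx)) <;> omega
      have hκdz0 : K.κ r (s₀ + (r : ℤ)) (t₀ + (r : ℤ) - 1) (SS.d r s₀ t₀ z) = 0 := by
        refine E_eq_zero_of_heq_zero ?_ ?_
          ((comm_d_heq K r s₀ t₀ z).symm.trans
            ((d_hcongr SS h0 h0' ez).trans (heq_of_eq hx))) <;> omega
      have hdz : SS.d r s₀ t₀ z = 0 := by
        refine hT _ _ _ (by omega) ⟨1, ?_⟩
        show K.κ r (s₀ + (r : ℤ)) (t₀ + (r : ℤ) - 1) (SS.d r s₀ t₀ z) = 0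
        exact hκdz0
      refine ⟨s₀, t₀, h0, h0', SS.pageMap r s₀ t₀ z hdz, ?_⟩
      apply eq_of_heq
      refine (cast_heq _ _).trans ?_
      refine (heq_of_eq (K.comm_pageMap r s₀ t₀ z hdz hdκz)).trans ?_
      exact (pageMap_hcongr SS h0 h0' ez hdκz hx).trans (heq_of_eq hpx)
    · -- Torsion vanishing in filtration ≥ r+1 at page r+1
      have key : ∀ (n : ℕ) (s t : ℤ) (τ : E (r + 1) s t),
          (r : ℤ) + 1 ≤ s → K.TorN (r + 1) n s t τ → τ = 0 := by
        intro n
        induction n with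
        | zero => intro s t τ _ hτ; exact hτ
        | succ n ihn =>
          intro s t τ hs hτ
          have hκτ0 : K.κ (r + 1) s t τ = 0 :=
            ihn (s + 4) (t + 24) _ (by omega) hτ
          obtain ⟨z, hz, hpz⟩ := SS.pageMap_surjective r s t τ
          have hκz : SS.d r (s + 4) (t + 24) (K.κ r s t z) = 0 := by
            rw [K.comm_d r s t z, hz, map_zero]
            exact E_eq_zero_of_heq_zero (by ring) (by ring) (cast_heq _ _)
          have h0 : SS.pageMap r (s + 4) (t + 24) (K.κ r s t z) hκz = 0 := by
            rw [← K.comm_pageMap r s t z hz hκz, hpz]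
            exact hκτ0
          obtain ⟨s₁, t₁, h1, h1', w, hw⟩ :=
            (SS.pageMap_eq_zero_iff r (s + 4) (t + 24) _ hκz).mp h0
          have ew : HEq (SS.d r s₁ t₁ w) (K.κ r s t z) :=
            (cast_heq (congrArg₂ (E r) h1 h1') (SS.d r s₁ t₁ w)).symm.trans
              (heq_of_eq hw)
          obtain ⟨s₂, t₂, h2, h2', w₁, hw₁⟩ := hDiv s₁ t₁ w (by omega)
          have ew₁ : HEq (K.κ r s₂ t₂ w₁) w :=
            (cast_heq (congrArg₂ (E r) h2 h2') (K.κ r s₂ t₂ w₁)).symm.trans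
              (heq_of_eq hw₁)
          have hsst : s₂ + (r : ℤ) = s := by omega
          have hstt : t₂ + (r : ℤ) - 1 = t := by omega
          set dv : E r s t := cast (congrArg₂ (E r) hsst hstt) (SS.d r s₂ t₂ w₁)
            with hdvdef
          have edv : HEq dv (SS.d r s₂ t₂ w₁) := cast_heq _ _
          have hκdv : K.κ r s t dv = K.κ r s t z := by
            apply eq_of_heq
            refine (κ_hcongr K hsst.symm hstt.symm edv).trans ?_
            refine HEq.trans (comm_d_heq K r s₂ t₂ w₁).symm ?_
            exact (d_hcongr SS h2 h2' ew₁).trans ew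
          have hu : z - dv = 0 := by
            refine hT s t _ (by omega) ⟨1, ?_⟩
            show K.κ r s t (z - dv) = 0
            rw [map_sub, hκdv, sub_self]
          have hzdv : z = dv := by rwa [sub_eq_zero] at hu
          rw [← hpz]
          apply pageMap_eq_zero_of SS z hz hsst hstt w₁
          exact edv.symm.trans (heq_of_eq hzdv.symm)
      intro s t x hs htor
      obtain ⟨m, hm⟩ := htor
      exact key m s t x (by push_cast at hs ⊢; omega) hm

end KappaTorsionPkg
/-- For a spectral sequence with a `κ̄`-operator of bidegree `(4,24)`
satisfying the standing hypotheses, and with `E₂` vanishing in negative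
filtrations: every nonzero `κ̄`-power-torsion class `a ∈ E_r` (`r ≥ 2`)
survives to every later page with nonzero classes; i.e. it is a permanent
cycle, never a boundary, and survives to `E_∞`. -/
theorem kappaTorsion_survives {E : ℕ → ℤ → ℤ → Type}
    [∀ r s t, AddCommGroup (E r s t)]
    {SS : SpectralSequence E} (K : KappaOp SS)
    (hyp : K.StandingHypotheses)
    (hneg : ∀ s t : ℤ, s < 0 → ∀ x : E 2 s t, x = 0)
    (r : ℕ) (hr : 2 ≤ r) (s t : ℤ) (a : E r s t) (ha : a ≠ 0)
    (n : ℕ) (hn : 1 ≤ n) (htor : K.iter r s t n a = 0) :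
    ∀ r' : ℕ, r ≤ r' →
      ∃ y : E r' s t, SS.IsClassOf s t r a r' y ∧ y ≠ 0 := by
  have pkg := kappa_pkg K hyp hneg
  have hTora : K.Tor r s t a := ⟨n, (iter_eq_zero_iff K r n s t a).mp htor⟩
  suffices H : ∀ r' : ℕ, r ≤ r' →
      ∃ y : E r' s t, SS.IsClassOf s t r a r' y ∧ y ≠ 0 ∧ K.Tor r' s t y by
    intro r' hr'
    obtain ⟨y, h1, h2, _⟩ := H r' hr'
    exact ⟨y, h1, h2⟩
  intro r' hrr'
  induction r', hrr' using Nat.le_induction with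
  | base => exact ⟨a, .refl r a, ha, hTora⟩
  | succ r' hrr' ih =>
    obtain ⟨y, hcls, hy0, hTy⟩ := ih
    obtain ⟨hNeg, hDiv, hT⟩ := pkg r' (le_trans hr hrr')
    have hs0 : 0 ≤ s := by
      by_contra h
      exact hy0 (hNeg s t (by omega) y)
    have hdy : SS.d r' s t y = 0 := by
      by_contra hne
      obtain ⟨m, hm⟩ := hTy
      exact hne (hT (s + (r' : ℤ)) (t + (r' : ℤ) - 1) (SS.d r' s t y) (by omega)
        ⟨m, TorN_d K r' m s t y hm⟩)
    have hsr : ¬ ((r' : ℤ) ≤ s) := fun hle => hy0 (hT s t y hle hTy)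
    refine ⟨SS.pageMap r' s t y hdy, .step hdy hcls, ?_, ?_⟩
    · intro h0
      obtain ⟨s', t', h, h', w, hw⟩ :=
        (SS.pageMap_eq_zero_iff r' s t y hdy).mp h0
      have hw0 : w = 0 := hNeg s' t' (by omega) w
      apply hy0
      have ey : HEq (SS.d r' s' t' w) y :=
        (cast_heq (congrArg₂ (E r') h h') (SS.d r' s' t' w)).symm.trans
          (heq_of_eq hw)
      rw [hw0, map_zero] at ey
      exact E_eq_zero_of_heq_zero h.symm h'.symm ey.symm
    · obtain ⟨m, hm⟩ := hTy
      exact ⟨m, TorN_pageMap K r' m s t y hdy hm⟩
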